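/- arXiv:1905.12233 — 3 statements merged into one kernel-verified Lean document; each statement's English description precedes it below -/
import Mathlib

section
/- Let G be a finite simple graph with vertex set V, edge set E, and minimum degree at least 2, let F ⊆ V, let k be a natural number, and let D be a natural number with deg(v) ≤ D for every v ∈ V \ F. If k·D < Σ_{v∈F} (deg(v) − 2), then there is no set S ⊆ V \ F with |S| ≤ k such that the induced subgraph G[V \ S] is acyclic. -/
open Finset SimpleGraph Walk

lemma forest_card_edge_le {W : Type*} [Fintype W] [DecidableEq W]
    (H : SimpleGraph W) [DecidableRel H.Adj] (hH : H.IsAcyclic) :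
    H.edgeFinset.card ≤ Fintype.card W := by
  classical
  set root : W → W := fun w => (H.connectedComponentMk w).out with hrootdef
  have hmkroot : ∀ w, H.connectedComponentMk (root w) = H.connectedComponentMk w := by
    intro w; exact (H.connectedComponentMk w).out_eq
  have hroot : ∀ w, H.Reachable w (root w) := by
    intro w; exact (ConnectedComponent.exact (hmkroot w)).symm
  have hrooteq : ∀ {x y : W}, H.Reachable x y → root x = root y := by
    intro x y h
    simp only [hrootdef]
    rw [ConnectedComponent.sound h]
  set f : ∀ w, H.Walk w (root w) := fun w => ((hroot w).some.toPath : H.Path w (root w)).1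
    with hfdef
  have hf : ∀ w, (f w).IsPath := fun w => ((hroot w).some.toPath).2
  have hf' : ∀ w (p : H.Walk w (root w)), p.IsPath → p = f w := by
    intro w p hp
    exact congrArg Subtype.val (hH.path_unique ⟨p, hp⟩ ((hroot w).some.toPath))
  set g : W → Sym2 W := fun w =>
    if h : (f w).Nil then s(w, w) else ((f w).firstDart h).edge with hgdef
  have key : ∀ x y : W, H.Adj x y → (f x).length ≤ (f y).length → g y = s(y, x) := by
    intro x y h h'
    have hrxy : root x = root y := hrooteq h.reachable
    set c : H.Walk y (root y) := Walk.cons h.symm ((f x).copy rfl hrxy) with hcdef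
    have hysup : y ∉ (f x).support := by
      intro hy
      have ht : ((f x).takeUntil y hy).IsPath := (hf x).takeUntil hy
      have hp2 : (Walk.cons h (Walk.nil)).IsPath := by
        simp [Walk.cons_isPath_iff, h.ne]
      have htp2 : (f x).takeUntil y hy = Walk.cons h Walk.nil :=
        congrArg Subtype.val (hH.path_unique ⟨_, ht⟩ ⟨_, hp2⟩)
      have hd : ((f x).dropUntil y hy).IsPath := (hf x).dropUntil hy
      have hdfy : ((f x).dropUntil y hy).copy rfl hrxy = f y :=
        hf' y _ (by simpa using hd)
      have hlen : ((f x).takeUntil y hy).length + ((f x).dropUntil y hy).length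
          = (f x).length := by
        rw [← Walk.length_append, Walk.take_spec]
      have h1 : ((f x).takeUntil y hy).length = 1 := by rw [htp2]; simp
      have h2 : (f y).length = ((f x).dropUntil y hy).length := by
        rw [← hdfy]; simp
      omega
    have hcp : c.IsPath := by
      rw [hcdef, Walk.cons_isPath_iff]
      exact ⟨by simpa using hf x, by simpa using hysup⟩
    have hc : c = f y := hf' y c hcp
    have hnil : ¬ (f y).Nil := by rw [← hc]; simp [hcdef]
    have hgv : (f y).getVert 1 = x := by
      rw [← hc]; simp [hcdef]
    rw [hgdef]
    simp only [dif_neg hnil]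
    rw [Walk.edge_firstDart _ hnil, show (f y).snd = x from hgv]
  have hsurj : Set.SurjOn g ↑(Finset.univ : Finset W) ↑H.edgeFinset := by
    intro e he
    simp only [Finset.coe_univ, Set.mem_univ, Set.image_univ, Set.mem_range]
    induction e with
    | _ x y =>
      simp only [Finset.mem_coe, mem_edgeFinset, SimpleGraph.mem_edgeSet] at he
      rcases le_total ((f x).length) ((f y).length) with hle | hle
      · exact ⟨y, by rw [key x y he hle]; rw [Sym2.eq_swap]⟩
      · exact ⟨x, by rw [key y x he.symm hle]⟩
  simpa using Finset.card_le_card_of_surjOn g hsurj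


/-- If `G` is a finite simple graph with minimum degree at least 2,
`F ⊆ V`, and `deg v ≤ D` for all `v ∉ F`, and `k·D < Σ_{v∈F} (deg v − 2)`, then
there is no feedback vertex set `S ⊆ V \ F` of size at most `k`. -/
theorem stmt0 {V : Type*} [Fintype V] [DecidableEq V]
    (G : SimpleGraph V) [DecidableRel G.Adj]
    (hmin : ∀ v : V, 2 ≤ G.degree v)
    (F : Finset V) (k D : ℕ)
    (hD : ∀ v : V, v ∉ F → G.degree v ≤ D)
    (hprune : (k : ℤ) * D < ∑ v ∈ F, ((G.degree v : ℤ) - 2)) :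
    ¬ ∃ S : Finset V, (∀ v ∈ S, v ∉ F) ∧ S.card ≤ k ∧
      (G.induce ((↑S : Set V)ᶜ)).IsAcyclic := by
  classical
  rintro ⟨S, hSF, hSk, hacyc⟩
  set s : Set V := (↑S : Set V)ᶜ with hsdef
  set A : Finset V := Sᶜ with hAdef
  have hmemsA : ∀ v : V, v ∈ s ↔ v ∈ A := by
    intro v; simp [hsdef, hAdef]
  haveI : DecidablePred (· ∈ s) := fun v => decidable_of_iff (v ∈ A) (hmemsA v).symm
  set H : SimpleGraph s := G.induce s with hHdef
  haveI : DecidableRel H.Adj := fun a b => decidable_of_iff (G.Adj a b) (by rw [hHdef]; rfl)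
  -- degree in induced graph
  have hdeg : ∀ w : s, H.degree w = (A.filter (G.Adj (↑w : V))).card := by
    intro w
    rw [← SimpleGraph.card_neighborFinset_eq_degree]
    apply Finset.card_bij (fun (a : s) _ => (a : V))
    · intro a ha
      rw [SimpleGraph.mem_neighborFinset] at ha
      rw [Finset.mem_filter]
      exact ⟨(hmemsA _).1 a.2, ha⟩
    · intro a _ b _ hab
      exact Subtype.ext hab
    · intro b hb
      rw [Finset.mem_filter] at hb
      refine ⟨⟨b, (hmemsA b).2 hb.1⟩, ?_, rfl⟩
      rw [SimpleGraph.mem_neighborFinset]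
      exact hb.2
  -- handshake for H
  have hX : ∑ v ∈ A, (A.filter (G.Adj v)).card = 2 * H.edgeFinset.card := by
    rw [← SimpleGraph.sum_degrees_eq_twice_card_edges]
    rw [Finset.sum_subtype A (fun x => (hmemsA x).symm)
      (fun v => (A.filter (G.Adj v)).card)]
    exact Finset.sum_congr rfl fun w _ => (hdeg w).symm
  -- forest bound
  have hcard : Fintype.card s = A.card := by
    rw [← Set.toFinset_card]
    congr 1
    ext v
    simp [hmemsA v]
  have hforest : H.edgeFinset.card ≤ A.card := by
    rw [← hcard]
    exact forest_card_edge_le H hacyc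
  -- double counting swap
  have hY : ∑ v ∈ A, (S.filter (G.Adj v)).card = ∑ u ∈ S, (A.filter (G.Adj u)).card := by
    calc ∑ v ∈ A, (S.filter (G.Adj v)).card
        = ∑ v ∈ A, ∑ u ∈ S, if G.Adj v u then 1 else 0 := by
          simp only [Finset.card_filter]
      _ = ∑ u ∈ S, ∑ v ∈ A, if G.Adj v u then 1 else 0 := Finset.sum_comm
      _ = ∑ u ∈ S, (A.filter (fun v => G.Adj v u)).card := by
          simp only [Finset.card_filter]
      _ = ∑ u ∈ S, (A.filter (G.Adj u)).card := by
          refine Finset.sum_congr rfl fun u _ => ?_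
          congr 1
          apply Finset.filter_congr
          intro v _
          simp [G.adj_comm]
  -- split the degree
  have hsplit : ∀ v : V, G.degree v = (A.filter (G.Adj v)).card + (S.filter (G.Adj v)).card := by
    intro v
    rw [← SimpleGraph.card_neighborFinset_eq_degree, SimpleGraph.neighborFinset_eq_filter]
    have huniv : (Finset.univ : Finset V) = A ∪ S := by
      rw [hAdef]; ext x; simp only [Finset.mem_union, Finset.mem_compl, Finset.mem_univ, iff_true]; tauto
    rw [huniv, Finset.filter_union, Finset.card_union_of_disjoint]
    exact Finset.disjoint_filter_filter (by rw [hAdef]; exact disjoint_compl_left)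
  -- bound Y
  have hYbound : ∑ u ∈ S, (A.filter (G.Adj u)).card ≤ k * D := by
    calc ∑ u ∈ S, (A.filter (G.Adj u)).card ≤ ∑ u ∈ S, D := by
          refine Finset.sum_le_sum fun u hu => ?_
          refine le_trans ?_ (hD u (hSF u hu))
          rw [← SimpleGraph.card_neighborFinset_eq_degree, SimpleGraph.neighborFinset_eq_filter]
          exact Finset.card_le_card (Finset.filter_subset_filter _ (Finset.subset_univ A))
      _ = S.card * D := by rw [Finset.sum_const, smul_eq_mul]
      _ ≤ k * D := Nat.mul_le_mul_right D hSk
  -- F ⊆ A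
  have hFA : F ⊆ A := by
    intro v hv
    rw [hAdef, Finset.mem_compl]
    intro hvS
    exact hSF v hvS hv
  -- lower bound on sum of degrees over A
  have hlow : ∑ v ∈ F, G.degree v + 2 * (A.card - F.card) ≤ ∑ v ∈ A, G.degree v := by
    rw [← Finset.sum_sdiff hFA]
    have : 2 * (A.card - F.card) ≤ ∑ v ∈ A \ F, G.degree v := by
      rw [← Finset.card_sdiff_of_subset hFA]
      calc 2 * (A \ F).card = ∑ _v ∈ A \ F, 2 := by rw [Finset.sum_const, smul_eq_mul, mul_comm]
        _ ≤ ∑ v ∈ A \ F, G.degree v := Finset.sum_le_sum fun v _ => hmin v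
    omega
  -- combine
  have hA : ∑ v ∈ A, G.degree v ≤ 2 * A.card + k * D := by
    calc ∑ v ∈ A, G.degree v
        = ∑ v ∈ A, (A.filter (G.Adj v)).card + ∑ v ∈ A, (S.filter (G.Adj v)).card := by
          rw [← Finset.sum_add_distrib]
          exact Finset.sum_congr rfl fun v _ => hsplit v
      _ ≤ 2 * A.card + k * D := by
          rw [hX, hY]
          exact Nat.add_le_add (Nat.mul_le_mul_left 2 hforest) hYbound
  have hFcard : F.card ≤ A.card := Finset.card_le_card hFA
  have hfinal : ∑ v ∈ F, G.degree v ≤ k * D + 2 * F.card := by omega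
  rw [Finset.sum_sub_distrib, Finset.sum_const] at hprune
  have : ((∑ v ∈ F, G.degree v : ℕ) : ℤ) ≤ (k : ℤ) * D + 2 * F.card := by exact_mod_cast hfinal
  push_cast at this hprune
  simp only [nsmul_eq_mul] at hprune
  linarith
end

section
/- Let α = 0.922863 and let β be the measure-and-conquer parameter function. For every integer D ≥ 5 and every finite list d = (d_1, …, d_f) of integers with 0 ≤ f ≤ D − 1 and d_i ≥ 3 for all i, it holds that Δ2(D, d) ≥ Δ2(D−1, d). -/
/-- The measure-and-conquer parameter function `β`. -/
noncomputable def mcBeta : ℕ → ℝ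
  | 0 => 0
  | 1 => 0
  | 2 => 0
  | 3 => 0.114038
  | 4 => 0.186479
  | 5 => 0.238143
  | 6 => 0.277239
  | 7 => 0.308030
  | 8 => 0.332974
  | 9 => 0.353536
  | 10 => 0.370540
  | 11 => 0.384771
  | 12 => 0.396884
  | 13 => 0.408715
  | 14 => 0.418855
  | 15 => 0.427643
  | 16 => 0.435333
  | 17 => 0.442118
  | 18 => 0.448149
  | 19 => 0.453544
  | 20 => 0.458401
  | 21 => 0.462794
  | 22 => 0.466788
  | 23 => 0.470435
  | 24 => 0.473778
  | 25 => 0.476853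
  | 26 => 0.479691
  | 27 => 0.482320
  | 28 => 0.484760
  | 29 => 0.487032
  | _ => 0.489153

/-- `Δ1(D, d) = 1 − f·α/D + Σ_{i=1}^f (β_{d_i} − β_{d_i−1})` where `f` is the
length of the list `d`. -/
noncomputable def Delta1 (α : ℝ) (β : ℕ → ℝ) (D : ℕ) (d : List ℕ) : ℝ :=
  1 - (d.length : ℝ) * α / D + (d.map (fun x => β x - β (x - 1))).sum

/-- `Δ2(D, d) = α − 2α/D + Σ_{i=1}^f β_{d_i} − β_{d'}` where
`d' = D + Σ_{i=1}^f (d_i − 2)`. -/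
noncomputable def Delta2 (α : ℝ) (β : ℕ → ℝ) (D : ℕ) (d : List ℕ) : ℝ :=
  α - 2 * α / D + (d.map β).sum - β (D + (d.map (fun x => x - 2)).sum)

lemma mcBeta_large (n : ℕ) (h : 30 ≤ n) : mcBeta n = 0.489153 := by
  obtain ⟨k, rfl⟩ := Nat.exists_eq_add_of_le h
  rw [Nat.add_comm]
  rfl

lemma mcBeta_incr (n : ℕ) (h : 5 ≤ n) :
    mcBeta n - mcBeta (n - 1) ≤ 2 * 0.922863 / ((n : ℝ) * ((n : ℝ) - 1)) := by
  rcases le_or_gt n 30 with h30 | h30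
  · interval_cases n <;> norm_num [mcBeta]
  · rw [mcBeta_large n (by omega), mcBeta_large (n - 1) (by omega)]
    have h5 : (5 : ℝ) ≤ (n : ℝ) := by exact_mod_cast (by omega : 5 ≤ n)
    have : (0 : ℝ) < (n : ℝ) * ((n : ℝ) - 1) := by nlinarith
    rw [sub_self]
    exact div_nonneg (by norm_num) this.le

/-- With `α = 0.922863` and the measure-and-conquer `β`, for any
integer `D ≥ 5` and any list `d` with `f ≤ D − 1` and `d_i ≥ 3` for all `i`,
`Δ2(D, d) ≥ Δ2(D−1, d)`. -/
theorem stmt13 (D : ℕ) (hD : 5 ≤ D) (d : List ℕ)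
    (hf : d.length ≤ D - 1) (hd : ∀ x ∈ d, 3 ≤ x) :
    Delta2 0.922863 mcBeta (D - 1) d ≤ Delta2 0.922863 mcBeta D d := by
  unfold Delta2
  set S := (d.map (fun x => x - 2)).sum with hS
  have hcast : ((D - 1 : ℕ) : ℝ) = (D : ℝ) - 1 := by
    have : 1 ≤ D := by omega
    push_cast [this]; ring
  have hidx : (D - 1) + S = (D + S) - 1 := by omega
  rw [hidx, hcast]
  have hD5 : (5 : ℝ) ≤ (D : ℝ) := by exact_mod_cast hD
  have hn5 : 5 ≤ D + S := by omega
  have key := mcBeta_incr (D + S) hn5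
  have hnD : (D : ℝ) ≤ ((D + S : ℕ) : ℝ) := by exact_mod_cast Nat.le_add_right D S
  have hpos : (0 : ℝ) < (D : ℝ) * ((D : ℝ) - 1) := by nlinarith
  have hmono : (D : ℝ) * ((D : ℝ) - 1) ≤ ((D + S : ℕ) : ℝ) * (((D + S : ℕ) : ℝ) - 1) := by
    nlinarith
  have h2 : 2 * 0.922863 / (((D + S : ℕ) : ℝ) * (((D + S : ℕ) : ℝ) - 1))
      ≤ 2 * 0.922863 / ((D : ℝ) * ((D : ℝ) - 1)) := by
    apply div_le_div_of_nonneg_left (by norm_num) hpos hmono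
  have heq : 2 * 0.922863 / ((D : ℝ) * ((D : ℝ) - 1))
      = 2 * 0.922863 / ((D : ℝ) - 1) - 2 * 0.922863 / (D : ℝ) := by
    have hDne : (D : ℝ) ≠ 0 := by linarith
    have hD1ne : (D : ℝ) - 1 ≠ 0 := by linarith
    field_simp
    ring
  linarith
end

section
/- For every natural number f, it holds that (1/4)·(8/3)^{min(f,4)/4} + (3/8)^{1/2}·(3/2)^{(1−f)/2} ≤ 1, with equality when f = 0 and when f = 4. -/
lemma pow_rpow_inv' (c : ℝ) (hc : 0 ≤ c) (n : ℕ) (hn : (n:ℝ) ≠ 0) :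
    (c ^ n) ^ ((1:ℝ)/n) = c := by
  rw [← Real.rpow_natCast c n, ← Real.rpow_mul hc, mul_one_div, div_self hn, Real.rpow_one]

lemma rpow_le' (x c : ℝ) (n : ℕ) (hx : 0 ≤ x) (hc : 0 ≤ c) (hn : (n:ℝ) ≠ 0)
    (h : x ≤ c ^ n) : x ^ ((1:ℝ)/n) ≤ c := by
  calc x ^ ((1:ℝ)/n) ≤ (c ^ n) ^ ((1:ℝ)/n) :=
        Real.rpow_le_rpow hx h (by positivity)
    _ = c := pow_rpow_inv' c hc n hn

lemma sq_rpow_half (c : ℝ) (hc : 0 ≤ c) : (c^2)^((1:ℝ)/2) = c := by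
  have := pow_rpow_inv' c hc 2 (by norm_num)
  norm_num at this; exact this

lemma rpow_half_le (x c : ℝ) (hx : 0 ≤ x) (hc : 0 ≤ c) (h : x ≤ c^2) :
    x ^ ((1:ℝ)/2) ≤ c := by
  have := rpow_le' x c 2 hx hc (by norm_num) h
  norm_num at this; exact this

lemma rpow_quarter_le (x c : ℝ) (hx : 0 ≤ x) (hc : 0 ≤ c) (h : x ≤ c^4) :
    x ^ ((1:ℝ)/4) ≤ c := by
  have := rpow_le' x c 4 hx hc (by norm_num) h
  norm_num at this; exact this

lemma hb38 : (3/8 : ℝ) ^ ((1:ℝ)/2) ≤ 62/100 :=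
  rpow_half_le _ _ (by norm_num) (by norm_num) (by norm_num)

/-- For every natural number `f`,
`(1/4)·(8/3)^{min(f,4)/4} + (3/8)^{1/2}·(3/2)^{(1−f)/2} ≤ 1`, with equality when
`f = 0` and when `f = 4`. -/
theorem stmt17 (f : ℕ) :
    (1 / 4) * (8 / 3 : ℝ) ^ (((min f 4 : ℕ) : ℝ) / 4)
        + (3 / 8 : ℝ) ^ ((1 : ℝ) / 2) * (3 / 2 : ℝ) ^ (((1 : ℝ) - (f : ℝ)) / 2) ≤ 1 ∧
    (f = 0 ∨ f = 4 →
      (1 / 4) * (8 / 3 : ℝ) ^ (((min f 4 : ℕ) : ℝ) / 4)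
        + (3 / 8 : ℝ) ^ ((1 : ℝ) / 2) * (3 / 2 : ℝ) ^ (((1 : ℝ) - (f : ℝ)) / 2) = 1) := by
  match f with
  | 0 =>
    have h0 : (1/4 : ℝ) * (8/3:ℝ) ^ (((min 0 4 : ℕ):ℝ)/4)
        + (3/8:ℝ)^((1:ℝ)/2) * (3/2:ℝ)^(((1:ℝ) - ((0:ℕ):ℝ))/2) = 1 := by
      rw [show (((min 0 4 : ℕ):ℝ))/4 = 0 by norm_num, Real.rpow_zero,
          show ((1:ℝ) - ((0:ℕ):ℝ))/2 = 1/2 by norm_num,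
          ← Real.mul_rpow (by norm_num) (by norm_num),
          show (3/8:ℝ)*(3/2) = (3/4)^2 by norm_num,
          sq_rpow_half (3/4) (by norm_num)]
      norm_num
    exact ⟨le_of_eq h0, fun _ => h0⟩
  | 1 =>
    refine ⟨?_, by rintro (h|h) <;> omega⟩
    rw [show (((min 1 4 : ℕ):ℝ))/4 = (1:ℝ)/4 by norm_num,
        show ((1:ℝ) - ((1:ℕ):ℝ))/2 = 0 by norm_num, Real.rpow_zero]
    have hA : (8/3:ℝ) ^ ((1:ℝ)/4) ≤ 13/10 :=
      rpow_quarter_le _ _ (by norm_num) (by norm_num) (by norm_num)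
    have hB := hb38
    linarith
  | 2 =>
    refine ⟨?_, by rintro (h|h) <;> omega⟩
    rw [show (((min 2 4 : ℕ):ℝ))/4 = (1:ℝ)/2 by norm_num,
        show ((1:ℝ) - ((2:ℕ):ℝ))/2 = -((1:ℝ)/2) by norm_num,
        Real.rpow_neg (by norm_num), ← Real.inv_rpow (by norm_num),
        ← Real.mul_rpow (by norm_num) (by norm_num),
        show (3/8:ℝ) * (3/2:ℝ)⁻¹ = (1/2)^2 by norm_num,
        sq_rpow_half (1/2) (by norm_num)]
    have hA : (8/3:ℝ) ^ ((1:ℝ)/2) ≤ 164/100 :=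
      rpow_half_le _ _ (by norm_num) (by norm_num) (by norm_num)
    linarith
  | 3 =>
    refine ⟨?_, by rintro (h|h) <;> omega⟩
    rw [show (((min 3 4 : ℕ):ℝ))/4 = (3:ℝ) * ((1:ℝ)/4) by norm_num,
        Real.rpow_mul (by norm_num),
        show ((8/3:ℝ))^(3:ℝ) = 512/27 by
          rw [show (3:ℝ) = ((3:ℕ):ℝ) by norm_num, Real.rpow_natCast]; norm_num,
        show ((1:ℝ) - ((3:ℕ):ℝ))/2 = -(1:ℝ) by norm_num,
        Real.rpow_neg (by norm_num), Real.rpow_one]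
    have hA : (512/27:ℝ) ^ ((1:ℝ)/4) ≤ 21/10 :=
      rpow_quarter_le _ _ (by norm_num) (by norm_num) (by norm_num)
    have hB := hb38
    have hBpos : (0:ℝ) ≤ (3/8 : ℝ) ^ ((1:ℝ)/2) := by positivity
    nlinarith
  | 4 =>
    have h4 : (1/4 : ℝ) * (8/3:ℝ) ^ (((min 4 4 : ℕ):ℝ)/4)
        + (3/8:ℝ)^((1:ℝ)/2) * (3/2:ℝ)^(((1:ℝ) - ((4:ℕ):ℝ))/2) = 1 := by
      rw [show (((min 4 4 : ℕ):ℝ))/4 = 1 by norm_num, Real.rpow_one,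
          show ((1:ℝ) - ((4:ℕ):ℝ))/2 = -((3:ℝ) * ((1:ℝ)/2)) by norm_num,
          Real.rpow_neg (by norm_num), Real.rpow_mul (by norm_num),
          show ((3/2:ℝ))^(3:ℝ) = 27/8 by
            rw [show (3:ℝ) = ((3:ℕ):ℝ) by norm_num, Real.rpow_natCast]; norm_num,
          ← Real.inv_rpow (by positivity),
          ← Real.mul_rpow (by norm_num) (by norm_num),
          show (3/8:ℝ) * ((27/8:ℝ))⁻¹ = (1/3)^2 by norm_num,
          sq_rpow_half (1/3) (by norm_num)]
      norm_num
    exact ⟨le_of_eq h4, fun _ => h4⟩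
  | (n+5) =>
    refine ⟨?_, by rintro (h|h) <;> omega⟩
    rw [show (((min (n+5) 4 : ℕ):ℝ))/4 = 1 by
          rw [min_eq_right (by omega)]; norm_num,
        Real.rpow_one]
    have hexp : ((1:ℝ) - ((n+5:ℕ):ℝ))/2 ≤ -2 := by
      have : (0:ℝ) ≤ (n:ℝ) := Nat.cast_nonneg n
      push_cast
      linarith
    have hmono : (3/2:ℝ)^(((1:ℝ) - ((n+5:ℕ):ℝ))/2) ≤ (3/2:ℝ)^((-2:ℝ)) :=
      Real.rpow_le_rpow_of_exponent_le (by norm_num) hexp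
    have hval : (3/2:ℝ)^((-2:ℝ)) = 4/9 := by
      rw [show (-2:ℝ) = -((2:ℕ):ℝ) by norm_num, Real.rpow_neg (by norm_num),
          Real.rpow_natCast]
      norm_num
    rw [hval] at hmono
    have hB := hb38
    have hBpos : (0:ℝ) ≤ (3/8 : ℝ) ^ ((1:ℝ)/2) := by positivity
    have hCpos : (0:ℝ) ≤ (3/2:ℝ)^(((1:ℝ) - ((n+5:ℕ):ℝ))/2) := by positivity
    nlinarith
end
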